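/- If n is not a triangular number, then the Bulgarian solitaire operator B has no fixed point among the partitions of n. -/
import Mathlib


/-- A partition of `n`: a multiset of positive integers summing to `n`
(multisets model nonincreasing sequences, since order is irrelevant). -/
def IsPartition (n : ℕ) (l : Multiset ℕ) : Prop :=
  l.sum = n ∧ ∀ x ∈ l, 0 < x

/-- The Bulgarian solitaire move: remove one card from each pile, discard empty
piles, and add a new pile whose size is the number of old piles. -/
def bulg (l : Multiset ℕ) : Multiset ℕ :=
  (Multiset.card l ::ₘ l.map (· - 1)).filter (0 < ·)

/-- The staircase partition `(k, k-1, …, 2, 1)`. -/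
def staircase (k : ℕ) : Multiset ℕ := (Multiset.range k).map (· + 1)

/-- If n is not a triangular number, the Bulgarian solitaire operator has no
fixed point among the partitions of n. -/
theorem bulg_no_fixed_point (n : ℕ) (hn : ¬ ∃ k : ℕ, n = k * (k + 1) / 2)
    (l : Multiset ℕ) (hl : IsPartition n l) :
    bulg l ≠ l := by
  intro h
  apply hn
  obtain ⟨hsum, hpos⟩ := hl
  set c := Multiset.card l with hc
  refine ⟨c, ?_⟩
  -- key recurrence for counts
  have hrec : ∀ j : ℕ, 0 < j →
      l.count j = (if j = c then 1 else 0) + l.count (j + 1) := by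
    intro j hj
    conv_lhs => rw [← h]
    rw [bulg, Multiset.count_filter, if_pos hj, Multiset.count_cons,
      Multiset.count_map]
    have hfc : Multiset.filter (fun a => j = a - 1) l
        = Multiset.filter (fun a => j + 1 = a) l := by
      apply Multiset.filter_congr
      intro x hx
      have := hpos x hx
      omega
    rw [hfc, ← Multiset.count_eq_card_filter_eq, ← hc]
    omega
  -- counts vanish above the sum
  have hzero : ∀ j : ℕ, l.sum < j → l.count j = 0 := by
    intro j hj
    rw [Multiset.count_eq_zero]
    intro hmem
    have := Multiset.single_le_sum (fun x _ => Nat.zero_le x) j hmem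
    omega
  -- counts vanish above c
  have habove : ∀ d j : ℕ, c < j → l.sum + 1 ≤ j + d → l.count j = 0 := by
    intro d
    induction d with
    | zero => intro j hj hd; exact hzero j (by omega)
    | succ d ih =>
        intro j hj hd
        rw [hrec j (by omega), if_neg (by omega), Nat.zero_add]
        exact ih (j + 1) (by omega) (by omega)
  have habove' : ∀ j : ℕ, c < j → l.count j = 0 := fun j hj =>
    habove (l.sum + 1) j hj (by omega)
  -- counts are 1 between 1 and c
  have hone : ∀ d j : ℕ, 0 < j → j + d = c → l.count j = 1 := by
    intro d
    induction d with
    | zero =>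
        intro j hj hd
        rw [hrec j hj, if_pos (by omega), habove' (j + 1) (by omega)]
    | succ d ih =>
        intro j hj hd
        rw [hrec j hj, if_neg (by omega), Nat.zero_add]
        exact ih (j + 1) (by omega) (by omega)
  -- l is the staircase
  have hstair : l = staircase c := by
    rw [Multiset.ext]
    intro a
    rcases Nat.eq_zero_or_pos a with ha | ha
    · subst ha
      rw [Multiset.count_eq_zero.2 (fun hmem => by have := hpos 0 hmem; omega)]
      rw [Multiset.count_eq_zero.2 ?_]
      intro hmem
      rw [staircase, Multiset.mem_map] at hmem
      obtain ⟨x, _, hx⟩ := hmem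
      omega
    · obtain ⟨b, rfl⟩ := Nat.exists_eq_add_of_le ha
      rw [staircase]
      rw [show 1 + b = b + 1 by omega,
        Multiset.count_map_eq_count' (· + 1) (Multiset.range c)
          (fun x y hxy => by simpa using hxy) b]
      rcases Nat.lt_or_ge b c with hb | hb
      · rw [hone (c - (b + 1)) (b + 1) (by omega) (by omega)]
        rw [Multiset.count_eq_one_of_mem (Multiset.nodup_range c)
          (Multiset.mem_range.2 hb)]
      · rw [habove' (b + 1) (by omega)]
        rw [Multiset.count_eq_zero.2 (fun hmem => by
          have := Multiset.mem_range.1 hmem; omega)]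
  -- compute the sum
  have hs : (staircase c).sum = ∑ i ∈ Finset.range c, (i + 1) := rfl
  have hg := Finset.sum_range_id_mul_two (c + 1)
  have hsucc : ∑ i ∈ Finset.range (c + 1), i = ∑ i ∈ Finset.range c, (i + 1) := by
    rw [Finset.sum_range_succ']
    omega
  have hg' : (∑ i ∈ Finset.range (c + 1), i) * 2 = c * (c + 1) := by
    rw [hg, Nat.add_sub_cancel, Nat.mul_comm]
  rw [← hsum, hstair, hs]
  omega
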